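/- Let v, k, λ be positive integers with 3 ≤ k < v, and let r, d be the integers with λ(v−1) = r(k−1) + d and 0 ≤ d < k−1. If d < r − λ, then every (v,k,λ)-packing has at most ⌊v(r−1)/(k−1)⌋ blocks. -/
import Mathlib

open Finset

lemma countP_eq_sum_toFinset {α : Type*} [DecidableEq α] (s : Multiset α) (p : α → Prop)
    [DecidablePred p] :
    s.countP p = ∑ a ∈ s.toFinset, if p a then s.count a else 0 := by
  rw [Finset.sum_ite, Finset.sum_const_zero, add_zero, ← Multiset.toFinset_filter,
    Multiset.countP_eq_card_filter, ← Multiset.toFinset_sum_count_eq (s.filter p)]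
  refine Finset.sum_congr rfl fun a ha => ?_
  rw [Multiset.count_filter_of_pos]
  exact (Multiset.mem_filter.mp (Multiset.mem_toFinset.mp ha)).2

theorem stmt_11 (v k l r d : ℕ) (hl : 0 < l) (hk : 3 ≤ k) (hkv : k < v)
    (hrd : l * (v - 1) = r * (k - 1) + d) (hd : d < k - 1) (hdr : d + l < r)
    (𝓑 : Multiset (Finset (Fin v)))
    (hblocks : ∀ b ∈ 𝓑, b.card = k)
    (hpack : ∀ u w : Fin v, u ≠ w → 𝓑.countP (fun b => u ∈ b ∧ w ∈ b) ≤ l) :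
    (Multiset.card 𝓑 : ℤ) ≤ (⌊(v * ((r : ℚ) - 1)) / (k - 1)⌋ : ℤ) := by
  classical
  set b := Multiset.card 𝓑 with hb
  set X := 𝓑.toFinset with hX
  set c : Finset (Fin v) → ℕ := fun B => 𝓑.count B with hcdef
  set μ : Fin v → Fin v → ℕ := fun x y => 𝓑.countP fun B => x ∈ B ∧ y ∈ B with hμdef
  set rx : Fin v → ℕ := fun x => 𝓑.countP fun B => x ∈ B with hrxdef
  have hXcard : X.card ≤ b := Multiset.toFinset_card_le 𝓑
  have hμX : ∀ x y : Fin v, μ x y = ∑ B ∈ X, if x ∈ B ∧ y ∈ B then c B else 0 :=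
    fun x y => countP_eq_sum_toFinset 𝓑 _
  have hrxX : ∀ x : Fin v, rx x = ∑ B ∈ X, if x ∈ B then c B else 0 :=
    fun x => countP_eq_sum_toFinset 𝓑 _
  have hcardv : (univ : Finset (Fin v)).card = v := by simp
  have hvpos : 0 < v := by omega
  -- F1 : row sums of the pair counts
  have F1 : ∀ x : Fin v, ∑ y ∈ univ.erase x, μ x y = rx x * (k - 1) := by
    intro x
    calc ∑ y ∈ univ.erase x, μ x y
        = ∑ B ∈ X, ∑ y ∈ univ.erase x, (if x ∈ B ∧ y ∈ B then c B else 0) := by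
          rw [Finset.sum_comm]
          exact Finset.sum_congr rfl fun y _ => hμX x y
      _ = ∑ B ∈ X, (if x ∈ B then c B else 0) * (k - 1) := by
          refine Finset.sum_congr rfl fun B hB => ?_
          by_cases hx : x ∈ B
          · simp only [hx, true_and, if_true]
            have h1 : ∀ y, (if y ∈ B then c B else 0) = (if y ∈ B then c B else 0) := fun _ => rfl
            rw [show (∑ y ∈ univ.erase x, if y ∈ B then c B else 0)
                = ∑ y ∈ (univ.erase x) ∩ B, c B from by rw [Finset.sum_ite_mem]]
            rw [Finset.sum_const, smul_eq_mul]
            have : (univ.erase x) ∩ B = B.erase x := by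
              ext z; simp [Finset.mem_erase, and_comm]
            rw [this, Finset.card_erase_of_mem hx, hblocks B (Multiset.mem_toFinset.mp hB),
              mul_comm]
          · simp [hx]
      _ = rx x * (k - 1) := by rw [← Finset.sum_mul, ← hrxX x]
  -- F3 : every point is in at most r blocks
  have F3 : ∀ x : Fin v, rx x ≤ r := by
    intro x
    have h1 : ∑ y ∈ univ.erase x, μ x y ≤ ∑ y ∈ univ.erase x, l :=
      Finset.sum_le_sum fun y hy => hpack x y (Ne.symm (Finset.mem_erase.mp hy).1)
    rw [F1 x, Finset.sum_const, smul_eq_mul, Finset.card_erase_of_mem (mem_univ x), hcardv] at h1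
    have h2 : rx x * (k - 1) < (r + 1) * (k - 1) := by
      calc rx x * (k - 1) ≤ (v - 1) * l := h1
        _ = r * (k - 1) + d := by rw [mul_comm]; exact hrd
        _ < (r + 1) * (k - 1) := by nlinarith [Nat.lt_of_lt_of_le hd (le_refl (k-1))]
    have := Nat.lt_of_mul_lt_mul_right h2
    omega
  set S : Finset (Fin v) := univ.filter (fun x => rx x = r) with hS
  -- row deficiency identity for points of S
  have Frow : ∀ x ∈ S, ∑ y ∈ univ.erase x, ((l : ℚ) - (μ x y : ℚ)) = (d : ℚ) := by
    intro x hx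
    have hrxr : rx x = r := (Finset.mem_filter.mp hx).2
    have h1 : ∑ y ∈ univ.erase x, (μ x y : ℚ) = (r * (k - 1) : ℕ) := by
      rw [← Nat.cast_sum, F1 x, hrxr]
    rw [Finset.sum_sub_distrib, h1, Finset.sum_const, Finset.card_erase_of_mem (mem_univ x),
      hcardv, nsmul_eq_mul]
    have : ((v - 1 : ℕ) : ℚ) * l = ((r * (k-1) + d : ℕ) : ℚ) := by
      rw [← hrd]; push_cast; ring
    push_cast at this ⊢
    linarith
  -- μ is symmetric
  have μsymm : ∀ x y : Fin v, μ x y = μ y x := fun x y =>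
    Multiset.countP_congr rfl fun B _ => by simp [and_comm]
  -- the crucial claim : S.card ≤ X.card
  have F5 : S.card ≤ X.card := by
    by_contra hcon
    push_neg at hcon
    set W : ↥S → (↥X → ℚ) := fun x B => if (x : Fin v) ∈ (B : Finset (Fin v)) then 1 else 0
      with hW
    have hnli : ¬ LinearIndependent ℚ W := by
      intro hli
      have h1 := hli.fintype_card_le_finrank
      rw [Module.finrank_fintype_fun_eq_card] at h1
      simp only [Fintype.card_coe] at h1
      omega
    obtain ⟨g, hg0, x₀, hx₀⟩ := Fintype.not_linearIndependent_iff.mp hnli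
    have heval : ∀ B : ↥X,
        ∑ x : ↥S, g x * (if (x : Fin v) ∈ (B : Finset (Fin v)) then (1:ℚ) else 0) = 0 := by
      intro B
      have h2 := congrFun hg0 B
      simpa [W] using h2
    -- the quadratic form
    have hQF0 : ∑ B : ↥X, (c B : ℚ) *
        (∑ x : ↥S, g x * (if (x : Fin v) ∈ (B : Finset (Fin v)) then (1:ℚ) else 0))^2 = 0 := by
      refine Finset.sum_eq_zero fun B _ => ?_
      rw [heval B]; ring
    have hQF : ∑ B : ↥X, (c B : ℚ) *
        (∑ x : ↥S, g x * (if (x : Fin v) ∈ (B : Finset (Fin v)) then (1:ℚ) else 0))^2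
        = ∑ x : ↥S, ∑ y : ↥S, g x * g y * (μ x y : ℚ) := by
      have expand : ∀ B : ↥X, (c B : ℚ) *
          (∑ x : ↥S, g x * (if (x : Fin v) ∈ (B : Finset (Fin v)) then (1:ℚ) else 0))^2
          = ∑ x : ↥S, ∑ y : ↥S, g x * g y *
            (if (x : Fin v) ∈ (B : Finset (Fin v)) ∧ (y : Fin v) ∈ (B : Finset (Fin v))
              then (c B : ℚ) else 0) := by
        intro B
        rw [sq, Fintype.sum_mul_sum, Finset.mul_sum]
        refine Finset.sum_congr rfl fun x _ => ?_
        rw [Finset.mul_sum]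
        refine Finset.sum_congr rfl fun y _ => ?_
        by_cases h1 : (x : Fin v) ∈ (B : Finset (Fin v)) <;>
          by_cases h2 : (y : Fin v) ∈ (B : Finset (Fin v)) <;> simp [h1, h2] <;> ring
      calc ∑ B : ↥X, (c B : ℚ) *
          (∑ x : ↥S, g x * (if (x : Fin v) ∈ (B : Finset (Fin v)) then (1:ℚ) else 0))^2
          = ∑ B : ↥X, ∑ x : ↥S, ∑ y : ↥S, g x * g y *
            (if (x : Fin v) ∈ (B : Finset (Fin v)) ∧ (y : Fin v) ∈ (B : Finset (Fin v))
              then (c B : ℚ) else 0) := Finset.sum_congr rfl fun B _ => expand B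
        _ = ∑ x : ↥S, ∑ y : ↥S, ∑ B : ↥X, g x * g y *
            (if (x : Fin v) ∈ (B : Finset (Fin v)) ∧ (y : Fin v) ∈ (B : Finset (Fin v))
              then (c B : ℚ) else 0) := by
            rw [Finset.sum_comm]
            exact Finset.sum_congr rfl fun x _ => Finset.sum_comm
        _ = ∑ x : ↥S, ∑ y : ↥S, g x * g y * (μ x y : ℚ) := by
            refine Finset.sum_congr rfl fun x _ => Finset.sum_congr rfl fun y _ => ?_
            rw [← Finset.mul_sum]
            congr 1
            rw [hμX (x : Fin v) (y : Fin v), Nat.cast_sum, ← Finset.sum_coe_sort X]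
            refine Finset.sum_congr rfl fun B _ => ?_
            split_ifs <;> simp
    -- abbreviations
    set T : ℚ := ∑ x : ↥S, g x with hT
    set A : ℚ := ∑ x : ↥S, (g x)^2 with hA
    set E : ℚ := ∑ x : ↥S, ∑ y ∈ (univ : Finset ↥S).erase x,
      g x * g y * ((l:ℚ) - (μ (x:Fin v) (y:Fin v) : ℚ)) with hE
    have hApos : 0 < A := by
      refine Finset.sum_pos' (fun x _ => sq_nonneg _) ⟨x₀, mem_univ _, ?_⟩
      rw [sq]
      exact mul_self_pos.mpr hx₀
    have hdiag : ∀ x : ↥S, (μ (x:Fin v) (x:Fin v) : ℚ) = r := by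
      intro x
      have h1 : μ (x:Fin v) (x:Fin v) = rx (x:Fin v) :=
        Multiset.countP_congr rfl fun B _ => by simp
      have h2 : rx (x:Fin v) = r := (Finset.mem_filter.mp x.2).2
      rw [h1, h2]
    -- swapping double sums over distinct pairs
    have hswap : ∀ F : ↥S → ↥S → ℚ,
        (∑ x : ↥S, ∑ y ∈ (univ : Finset ↥S).erase x, F x y)
        = ∑ y : ↥S, ∑ x ∈ (univ : Finset ↥S).erase y, F x y := by
      intro F
      have h1 : ∀ (a : ↥S) (G : ↥S → ℚ), ∑ y ∈ (univ : Finset ↥S).erase a, G y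
          = ∑ y : ↥S, if y ≠ a then G y else 0 := by
        intro a G
        rw [← Finset.sum_filter]
        congr 1
        ext z
        simp [Finset.mem_erase]
      calc (∑ x : ↥S, ∑ y ∈ (univ : Finset ↥S).erase x, F x y)
          = ∑ x : ↥S, ∑ y : ↥S, if y ≠ x then F x y else 0 :=
            Finset.sum_congr rfl fun x _ => h1 x (F x)
        _ = ∑ y : ↥S, ∑ x : ↥S, if y ≠ x then F x y else 0 := Finset.sum_comm
        _ = ∑ y : ↥S, ∑ x ∈ (univ : Finset ↥S).erase y, F x y := by
            refine Finset.sum_congr rfl fun y _ => ?_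
            rw [h1 y (fun x => F x y)]
            refine Finset.sum_congr rfl fun x _ => ?_
            by_cases h : x = y
            · simp [h]
            · simp [h, Ne.symm h]
    -- row deficiency bound on S
    have rowbound : ∀ x : ↥S, ∑ y ∈ (univ : Finset ↥S).erase x,
        ((l:ℚ) - (μ (x:Fin v) (y:Fin v) : ℚ)) ≤ (d : ℚ) := by
      intro x
      have h1 : ∑ y ∈ (univ : Finset ↥S).erase x, ((l:ℚ) - (μ (x:Fin v) (y:Fin v) : ℚ))
          = ∑ z ∈ ((univ : Finset ↥S).erase x).image Subtype.val,
              ((l:ℚ) - (μ (x:Fin v) z : ℚ)) :=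
        (Finset.sum_image (f := fun z => (l:ℚ) - (μ (x:Fin v) z : ℚ)) (g := Subtype.val)
          (fun a _ b _ h => Subtype.val_injective h)).symm
      have h2 : ((univ : Finset ↥S).erase x).image Subtype.val
          ⊆ (univ : Finset (Fin v)).erase (x : Fin v) := by
        intro z hz
        simp only [Finset.mem_image] at hz
        obtain ⟨y, hy, rfl⟩ := hz
        exact Finset.mem_erase.mpr
          ⟨fun hc => (Finset.mem_erase.mp hy).1 (Subtype.ext hc), mem_univ _⟩
      have h3 : ∑ z ∈ ((univ : Finset ↥S).erase x).image Subtype.val,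
            ((l:ℚ) - (μ (x:Fin v) z : ℚ))
          ≤ ∑ z ∈ (univ : Finset (Fin v)).erase (x : Fin v),
            ((l:ℚ) - (μ (x:Fin v) z : ℚ)) := by
        refine Finset.sum_le_sum_of_subset_of_nonneg h2 fun z hz _ => ?_
        have hzx : z ≠ (x : Fin v) := (Finset.mem_erase.mp hz).1
        have h4 : μ (x:Fin v) z ≤ l := hpack _ _ (Ne.symm hzx)
        have h5 : (μ (x:Fin v) z : ℚ) ≤ (l:ℚ) := by exact_mod_cast h4
        linarith
      rw [h1]
      exact h3.trans_eq (Frow (x : Fin v) x.2)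
    -- per-row expansion of the quadratic form
    have per : ∀ x : ↥S, ∑ y : ↥S, g x * g y * (μ (x:Fin v) (y:Fin v) : ℚ)
        = (g x)^2 * ((r:ℚ) - l) + (l:ℚ) * (g x * T)
          - ∑ y ∈ (univ : Finset ↥S).erase x,
              g x * g y * ((l:ℚ) - (μ (x:Fin v) (y:Fin v) : ℚ)) := by
      intro x
      have hSE : g x + ∑ y ∈ (univ : Finset ↥S).erase x, g y = T :=
        Finset.add_sum_erase _ g (mem_univ x)
      rw [← Finset.add_sum_erase _ (fun y => g x * g y * (μ (x:Fin v) (y:Fin v) : ℚ))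
        (mem_univ x)]
      have h2 : ∑ y ∈ (univ : Finset ↥S).erase x, g x * g y * (μ (x:Fin v) (y:Fin v) : ℚ)
          = (∑ y ∈ (univ : Finset ↥S).erase x, (g x * (l:ℚ)) * g y)
            - ∑ y ∈ (univ : Finset ↥S).erase x,
                g x * g y * ((l:ℚ) - (μ (x:Fin v) (y:Fin v) : ℚ)) := by
        rw [← Finset.sum_sub_distrib]
        exact Finset.sum_congr rfl fun y _ => by ring
      rw [h2, ← Finset.mul_sum, show (∑ y ∈ (univ : Finset ↥S).erase x, g y) = T - g x from
        by linarith [hSE], hdiag x]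
      ring
    have hQQ2 : (∑ x : ↥S, ∑ y : ↥S, g x * g y * (μ (x:Fin v) (y:Fin v) : ℚ))
        = ((r:ℚ) - l) * A + (l:ℚ) * T^2 - E := by
      calc (∑ x : ↥S, ∑ y : ↥S, g x * g y * (μ (x:Fin v) (y:Fin v) : ℚ))
          = ∑ x : ↥S, ((g x)^2 * ((r:ℚ) - l) + (l:ℚ) * (g x * T)
            - ∑ y ∈ (univ : Finset ↥S).erase x,
                g x * g y * ((l:ℚ) - (μ (x:Fin v) (y:Fin v) : ℚ))) :=
            Finset.sum_congr rfl fun x _ => per x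
        _ = ((r:ℚ) - l) * A + (l:ℚ) * T^2 - E := by
            rw [Finset.sum_sub_distrib, Finset.sum_add_distrib, ← Finset.sum_mul,
              ← Finset.mul_sum, ← hA, ← hE]
            have h3 : (∑ x : ↥S, g x * T) = T^2 := by
              rw [← Finset.sum_mul, ← hT, sq]
            rw [h3]
            ring
    have hzero : ((r:ℚ) - l) * A + (l:ℚ) * T^2 - E = 0 := by
      rw [← hQQ2]
      exact hQF.symm.trans hQF0
    -- bounding E
    have hP : ∑ x : ↥S, ∑ y ∈ (univ : Finset ↥S).erase x,
        (g x)^2 * ((l:ℚ) - (μ (x:Fin v) (y:Fin v) : ℚ)) ≤ (d:ℚ) * A := by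
      calc ∑ x : ↥S, ∑ y ∈ (univ : Finset ↥S).erase x,
            (g x)^2 * ((l:ℚ) - (μ (x:Fin v) (y:Fin v) : ℚ))
          = ∑ x : ↥S, (g x)^2 * ∑ y ∈ (univ : Finset ↥S).erase x,
              ((l:ℚ) - (μ (x:Fin v) (y:Fin v) : ℚ)) :=
            Finset.sum_congr rfl fun x _ => by rw [Finset.mul_sum]
        _ ≤ ∑ x : ↥S, (g x)^2 * (d:ℚ) :=
            Finset.sum_le_sum fun x _ =>
              mul_le_mul_of_nonneg_left (rowbound x) (sq_nonneg _)
        _ = (d:ℚ) * A := by rw [← Finset.sum_mul, ← hA, mul_comm]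
    have hQeq : ∑ x : ↥S, ∑ y ∈ (univ : Finset ↥S).erase x,
          (g y)^2 * ((l:ℚ) - (μ (x:Fin v) (y:Fin v) : ℚ))
        = ∑ x : ↥S, ∑ y ∈ (univ : Finset ↥S).erase x,
          (g x)^2 * ((l:ℚ) - (μ (x:Fin v) (y:Fin v) : ℚ)) := by
      rw [hswap (fun x y => (g y)^2 * ((l:ℚ) - (μ (x:Fin v) (y:Fin v) : ℚ)))]
      refine Finset.sum_congr rfl fun a _ => Finset.sum_congr rfl fun c' _ => ?_
      rw [μsymm (c' : Fin v) (a : Fin v)]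
    have hEP : E ≤ ∑ x : ↥S, ∑ y ∈ (univ : Finset ↥S).erase x,
        (g x)^2 * ((l:ℚ) - (μ (x:Fin v) (y:Fin v) : ℚ)) := by
      have e1 : ∀ x : ↥S, ∑ y ∈ (univ : Finset ↥S).erase x,
          ((g x)^2/2 + (g y)^2/2) * ((l:ℚ) - (μ (x:Fin v) (y:Fin v) : ℚ))
          = (∑ y ∈ (univ : Finset ↥S).erase x,
              (g x)^2 * ((l:ℚ) - (μ (x:Fin v) (y:Fin v) : ℚ)))/2
            + (∑ y ∈ (univ : Finset ↥S).erase x,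
              (g y)^2 * ((l:ℚ) - (μ (x:Fin v) (y:Fin v) : ℚ)))/2 := by
        intro x
        rw [Finset.sum_div, Finset.sum_div, ← Finset.sum_add_distrib]
        exact Finset.sum_congr rfl fun y _ => by ring
      calc E ≤ ∑ x : ↥S, ∑ y ∈ (univ : Finset ↥S).erase x,
            ((g x)^2/2 + (g y)^2/2) * ((l:ℚ) - (μ (x:Fin v) (y:Fin v) : ℚ)) := by
            rw [hE]
            refine Finset.sum_le_sum fun x _ => Finset.sum_le_sum fun y hy => ?_
            have hne : (y : Fin v) ≠ (x : Fin v) :=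
              fun hc => (Finset.mem_erase.mp hy).1 (Subtype.ext hc)
            have h4 : μ (x:Fin v) (y:Fin v) ≤ l := hpack _ _ (Ne.symm hne)
            have h5 : (0:ℚ) ≤ (l:ℚ) - (μ (x:Fin v) (y:Fin v) : ℚ) := by
              have : (μ (x:Fin v) (y:Fin v) : ℚ) ≤ (l:ℚ) := by exact_mod_cast h4
              linarith
            refine mul_le_mul_of_nonneg_right ?_ h5
            nlinarith [sq_nonneg (g x - g y)]
        _ = (∑ x : ↥S, ∑ y ∈ (univ : Finset ↥S).erase x,
              (g x)^2 * ((l:ℚ) - (μ (x:Fin v) (y:Fin v) : ℚ)))/2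
            + (∑ x : ↥S, ∑ y ∈ (univ : Finset ↥S).erase x,
              (g y)^2 * ((l:ℚ) - (μ (x:Fin v) (y:Fin v) : ℚ)))/2 := by
            rw [Finset.sum_congr rfl fun x _ => e1 x, Finset.sum_add_distrib,
              ← Finset.sum_div, ← Finset.sum_div]
        _ = ∑ x : ↥S, ∑ y ∈ (univ : Finset ↥S).erase x,
              (g x)^2 * ((l:ℚ) - (μ (x:Fin v) (y:Fin v) : ℚ)) := by
            rw [hQeq]
            ring
    have hEb : E ≤ (d:ℚ) * A := hEP.trans hP
    have hrcast : (d:ℚ) + l + 1 ≤ r := by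
      have h6 : d + l + 1 ≤ r := hdr
      exact_mod_cast h6
    have hTnn : 0 ≤ (l:ℚ) * T^2 := mul_nonneg (Nat.cast_nonneg l) (sq_nonneg T)
    have h9 : (1:ℚ) * A ≤ ((r:ℚ) - l - (d:ℚ)) * A :=
      mul_le_mul_of_nonneg_right (by linarith) (le_of_lt hApos)
    have h10 : ((r:ℚ) - l - (d:ℚ)) * A = ((r:ℚ) - l) * A - (d:ℚ) * A := by ring
    linarith
  -- final counting
  have hsum_rx : ∑ x : Fin v, rx x = b * k := by
    calc ∑ x : Fin v, rx x = ∑ x : Fin v, ∑ B ∈ X, if x ∈ B then c B else 0 :=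
          Finset.sum_congr rfl fun x _ => hrxX x
      _ = ∑ B ∈ X, ∑ x : Fin v, if x ∈ B then c B else 0 := Finset.sum_comm
      _ = ∑ B ∈ X, c B * k := by
          refine Finset.sum_congr rfl fun B hB => ?_
          rw [Finset.sum_ite_mem, Finset.univ_inter, Finset.sum_const, smul_eq_mul,
            hblocks B (Multiset.mem_toFinset.mp hB), mul_comm]
      _ = b * k := by rw [← Finset.sum_mul, Multiset.toFinset_sum_count_eq]
  have hcount : b * k ≤ v * (r - 1) + b := by
    calc b * k = ∑ x : Fin v, rx x := hsum_rx.symm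
      _ ≤ ∑ x : Fin v, ((r - 1) + if x ∈ S then 1 else 0) := by
          refine Finset.sum_le_sum fun x _ => ?_
          by_cases hxS : x ∈ S
          · have h1 : rx x = r := (Finset.mem_filter.mp hxS).2
            simp only [hxS, if_true]
            omega
          · have h1 : rx x ≤ r := F3 x
            have h2 : rx x ≠ r := fun h => hxS (Finset.mem_filter.mpr ⟨mem_univ x, h⟩)
            simp only [hxS, if_false]
            omega
      _ = v * (r - 1) + S.card := by
          rw [Finset.sum_add_distrib, Finset.sum_const, smul_eq_mul, hcardv,
            Finset.sum_ite_mem, Finset.univ_inter, Finset.sum_const, smul_eq_mul, mul_one]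
      _ ≤ v * (r - 1) + b := by
          have := F5.trans hXcard
          omega
  have hfin : b * (k - 1) ≤ v * (r - 1) := by
    have h1 : b * (k - 1) + b = b * k := by
      have h2 : k - 1 + 1 = k := by omega
      calc b * (k - 1) + b = b * ((k - 1) + 1) := by ring
        _ = b * k := by rw [h2]
    omega
  -- conclusion
  rw [Int.le_floor]
  have hkQ : 0 < (k:ℚ) - 1 := by
    have h1 : (3:ℚ) ≤ (k:ℚ) := by exact_mod_cast hk
    linarith
  have hr1 : 1 ≤ r := by omega
  have hcast : (b:ℚ) * ((k:ℚ) - 1) ≤ (v:ℚ) * ((r:ℚ) - 1) := by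
    have h2 : ((b * (k - 1) : ℕ) : ℚ) ≤ ((v * (r - 1) : ℕ) : ℚ) := by exact_mod_cast hfin
    rw [Nat.cast_mul, Nat.cast_mul, Nat.cast_sub (by omega : 1 ≤ k), Nat.cast_sub hr1,
      Nat.cast_one] at h2
    exact h2
  push_cast
  rw [le_div_iff₀ hkQ]
  linarith
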